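/- If P(z) = Σ_{j=0}^m a_j z^j is a polynomial of degree m with real coefficients satisfying a_m ≥ a_{m-1} ≥ ... ≥ a_1 ≥ a_0 > 0, then every complex zero z of P satisfies |z| ≤ 1. -/

import Mathlib

/-- Eneström–Kakeya Theorem: if the real coefficients of `p(z) = ∑_{j=0}^m a_j z^j`
satisfy `a_m ≥ a_{m-1} ≥ ⋯ ≥ a_1 ≥ a_0 > 0`, then every complex zero `z` of `p`
satisfies `|z| ≤ 1`. -/
theorem enestrom_kakeya (m : ℕ) (a : ℕ → ℝ)
    (hpos : 0 < a 0)
    (hmono : ∀ j < m, a j ≤ a (j + 1))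
    (z : ℂ) (hz : ∑ j ∈ Finset.range (m + 1), (a j : ℂ) * z ^ j = 0) :
    ‖z‖ ≤ 1 := by
  by_contra hc
  push_neg at hc
  set r := ‖z‖ with hr
  have hr1 : 1 < r := hc
  have hr0 : 0 ≤ r := le_of_lt (lt_trans one_pos hr1)
  -- positivity of all relevant coefficients
  have hposall : ∀ j, j ≤ m → 0 < a j := by
    intro j hj
    induction j with
    | zero => exact hpos
    | succ n ih =>
      exact lt_of_lt_of_le (ih (Nat.le_of_succ_le hj)) (hmono n hj)
  have ham : 0 < a m := hposall m le_rfl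
  -- z * P(z) = 0
  have hz2 : ∑ j ∈ Finset.range (m + 1), (a j : ℂ) * z ^ (j + 1) = 0 := by
    have e0 : z * ∑ j ∈ Finset.range (m + 1), (a j : ℂ) * z ^ j
        = ∑ j ∈ Finset.range (m + 1), (a j : ℂ) * z ^ (j + 1) := by
      rw [Finset.mul_sum]
      exact Finset.sum_congr rfl fun j _ => by ring
    rw [← e0, hz, mul_zero]
  have e1 := Finset.sum_range_succ (fun j => (a j : ℂ) * z ^ (j + 1)) m
  have e2 := Finset.sum_range_succ' (fun j => (a j : ℂ) * z ^ j) m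
  simp only [pow_zero, mul_one] at e2
  have hA : (∑ j ∈ Finset.range m, (a (j + 1) : ℂ) * z ^ (j + 1)) + (a 0 : ℂ) = 0 :=
    e2.symm.trans hz
  have hB : (∑ j ∈ Finset.range m, (a j : ℂ) * z ^ (j + 1)) + (a m : ℂ) * z ^ (m + 1) = 0 :=
    e1.symm.trans hz2
  have h3 : ∑ j ∈ Finset.range m, ((a (j + 1) : ℂ) - a j) * z ^ (j + 1)
      = (∑ j ∈ Finset.range m, (a (j + 1) : ℂ) * z ^ (j + 1))
        - ∑ j ∈ Finset.range m, (a j : ℂ) * z ^ (j + 1) := by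
    rw [← Finset.sum_sub_distrib]
    exact Finset.sum_congr rfl fun j _ => by ring
  have key : (a m : ℂ) * z ^ (m + 1)
      = (a 0 : ℂ) + ∑ j ∈ Finset.range m, ((a (j + 1) : ℂ) - a j) * z ^ (j + 1) := by
    rw [h3]
    linear_combination hB - hA
  -- take absolute values
  have habs : a m * r ^ (m + 1)
      ≤ a 0 + ∑ j ∈ Finset.range m, (a (j + 1) - a j) * r ^ (j + 1) := by
    have h1 : ‖(a m : ℂ) * z ^ (m + 1)‖ = a m * r ^ (m + 1) := by
      rw [norm_mul, norm_pow, Complex.norm_real, Real.norm_eq_abs, abs_of_pos ham]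
    calc a m * r ^ (m + 1)
        = ‖(a 0 : ℂ) + ∑ j ∈ Finset.range m, ((a (j + 1) : ℂ) - a j) * z ^ (j + 1)‖ := by
          rw [← key, h1]
      _ ≤ ‖(a 0 : ℂ)‖
          + ‖∑ j ∈ Finset.range m, ((a (j + 1) : ℂ) - a j) * z ^ (j + 1)‖ :=
          norm_add_le _ _
      _ ≤ a 0 + ∑ j ∈ Finset.range m, (a (j + 1) - a j) * r ^ (j + 1) := by
          gcongr
          · rw [Complex.norm_real, Real.norm_eq_abs, abs_of_pos hpos]
          · refine le_trans (norm_sum_le _ _) ?_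
            refine Finset.sum_le_sum fun j hj => ?_
            rw [norm_mul, norm_pow]
            have : ((a (j + 1) : ℂ) - a j) = ((a (j + 1) - a j : ℝ) : ℂ) := by push_cast; ring
            rw [this, Complex.norm_real, Real.norm_eq_abs,
              abs_of_nonneg (sub_nonneg.mpr (hmono j (Finset.mem_range.mp hj)))]
  -- bound the RHS by a m * r ^ m
  have hbound : a 0 + ∑ j ∈ Finset.range m, (a (j + 1) - a j) * r ^ (j + 1)
      ≤ a m * r ^ m := by
    have step : ∀ j ∈ Finset.range m,
        (a (j + 1) - a j) * r ^ (j + 1) ≤ (a (j + 1) - a j) * r ^ m := by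
      intro j hj
      have hjm := Finset.mem_range.mp hj
      have hd : 0 ≤ a (j + 1) - a j := sub_nonneg.mpr (hmono j hjm)
      exact mul_le_mul_of_nonneg_left (pow_le_pow_right₀ (le_of_lt hr1) hjm) hd
    have h0 : a 0 ≤ a 0 * r ^ m := by
      nlinarith [one_le_pow₀ (le_of_lt hr1) (n := m), le_of_lt hpos]
    calc a 0 + ∑ j ∈ Finset.range m, (a (j + 1) - a j) * r ^ (j + 1)
        ≤ a 0 * r ^ m + ∑ j ∈ Finset.range m, (a (j + 1) - a j) * r ^ m :=
          add_le_add h0 (Finset.sum_le_sum step)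
      _ = (a 0 + ∑ j ∈ Finset.range m, (a (j + 1) - a j)) * r ^ m := by
          rw [← Finset.sum_mul, add_mul]
      _ = a m * r ^ m := by rw [Finset.sum_range_sub a m]; ring
  -- contradiction
  have hlt : a m * r ^ m < a m * r ^ (m + 1) := by
    have : r ^ m < r ^ (m + 1) := by
      have := pow_lt_pow_right₀ hr1 (Nat.lt_succ_self m)
      exact this
    exact mul_lt_mul_of_pos_left this ham
  linarith
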